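/- Let f, f' ⊂ ℝ^{4,2} be 2-dimensional totally isotropic subspaces (contact elements) with f ∩ f' ≠ {0}, and let r ∈ f, r' ∈ f' be nonzero vectors with ⟨r,r'⟩ ≠ 0. Then f ∩ f' is exactly 1-dimensional, f = span({r} ∪ (f ∩ f')) and f' = span({r'} ∪ (f ∩ f')), and for every a = μ·r + μ'·r' with μ·μ' ≠ 0 (so ⟨a,a⟩ = 2μμ'⟨r,r'⟩ ≠ 0) the Lie inversion σ_a maps f' onto f and f onto f'. (Lemma: the Lie inversions associated to an edge of a discrete Ribaucour sphere congruence exchange adjacent contact elements of any envelope.) -/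

import Mathlib

noncomputable section

/-- The vector space ℝ^{4,2}, modeled as `Fin 6 → ℝ`. -/
abbrev R42 : Type := Fin 6 → ℝ

/-- The symmetric bilinear form of signature (4,2) on ℝ^{4,2}. -/
def bform : R42 →ₗ[ℝ] R42 →ₗ[ℝ] ℝ :=
  LinearMap.mk₂ ℝ
    (fun x y => x 0 * y 0 + x 1 * y 1 + x 2 * y 2 + x 3 * y 3 - x 4 * y 4 - x 5 * y 5)
    (fun x x' y => by simp only [Pi.add_apply]; ring)
    (fun c x y => by simp only [Pi.smul_apply, smul_eq_mul]; ring)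
    (fun x y y' => by simp only [Pi.add_apply]; ring)
    (fun c x y => by simp only [Pi.smul_apply, smul_eq_mul]; ring)

/-- A lightlike vector: nonzero and isotropic. Represents an oriented 2-sphere. -/
def IsLightlike (v : R42) : Prop := v ≠ 0 ∧ bform v v = 0

/-- The Lie inversion with respect to the linear sphere complex determined by `a`. -/
def lieInv (a r : R42) : R42 := r - (2 * bform r a / bform a a) • a

lemma bform_symm (x y : R42) : bform x y = bform y x := by
  simp only [bform, LinearMap.mk₂_apply]; ring

lemma lieInv_invol (a : R42) (ha : bform a a ≠ 0) (v : R42) :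
    lieInv a (lieInv a v) = v := by
  unfold lieInv
  have h1 : bform (v - (2 * bform v a / bform a a) • a) a = -bform v a := by
    simp only [map_sub, map_smul, LinearMap.sub_apply, LinearMap.smul_apply, smul_eq_mul]
    field_simp
    ring
  rw [h1]
  have h2 : 2 * -bform v a / bform a a = -(2 * bform v a / bform a a) := by ring
  rw [h2]
  module


/-- Two contact elements `f`, `f'` with nontrivial intersection,
containing non-orthogonal spheres `r ∈ f`, `r' ∈ f'`: the intersection is exactly
1-dimensional, `f = span({r} ∪ (f ⊓ f'))`, `f' = span({r'} ∪ (f ⊓ f'))`, and for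
every `a = μ•r + μ'•r'` with `μμ' ≠ 0` the Lie inversion `σ_a` interchanges
`f` and `f'`. -/
theorem stmt_8 (f f' : Submodule ℝ R42)
    (hf2 : Module.finrank ℝ f = 2) (hf'2 : Module.finrank ℝ f' = 2)
    (hfiso : ∀ u ∈ f, ∀ v ∈ f, bform u v = 0)
    (hf'iso : ∀ u ∈ f', ∀ v ∈ f', bform u v = 0)
    (hint : f ⊓ f' ≠ ⊥)
    (r r' : R42) (hr : r ∈ f) (hr' : r' ∈ f')
    (hr0 : r ≠ 0) (hr'0 : r' ≠ 0) (hrr' : bform r r' ≠ 0) :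
    Module.finrank ℝ ↥(f ⊓ f') = 1 ∧
    f = Submodule.span ℝ ({r} ∪ ((f ⊓ f' : Submodule ℝ R42) : Set R42)) ∧
    f' = Submodule.span ℝ ({r'} ∪ ((f ⊓ f' : Submodule ℝ R42) : Set R42)) ∧
    ∀ μ μ' : ℝ, μ * μ' ≠ 0 →
      ∀ a : R42, a = μ • r + μ' • r' →
        bform a a = 2 * μ * μ' * bform r r' ∧ bform a a ≠ 0 ∧
        lieInv a '' (f' : Set R42) = (f : Set R42) ∧
        lieInv a '' (f : Set R42) = (f' : Set R42) := by

  have hrf' : r ∉ f' := fun h => hrr' (hf'iso r h r' hr')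
  have hr'f : r' ∉ f := fun h => hrr' (hfiso r hr r' h)
  obtain ⟨s, hs, hs0⟩ := (Submodule.ne_bot_iff _).mp hint
  have hsf : s ∈ f := hs.1
  have hsf' : s ∈ f' := hs.2
  have hsr : bform s r = 0 := hfiso s hsf r hr
  have hrs : bform r s = 0 := hfiso r hr s hsf
  have hsr' : bform s r' = 0 := hf'iso s hsf' r' hr'
  have hr's : bform r' s = 0 := hf'iso r' hr' s hsf'
  have hrrz : bform r r = 0 := hfiso r hr r hr
  have hr'r'z : bform r' r' = 0 := hf'iso r' hr' r' hr'
  have hr'r : bform r' r = bform r r' := bform_symm r' r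
  -- dimension of intersection
  have hle : f ⊓ f' ≤ f := inf_le_left
  have hfinle : Module.finrank ℝ ↥(f ⊓ f') ≤ 2 := hf2 ▸ Submodule.finrank_mono hle
  have hpos : 0 < Module.finrank ℝ ↥(f ⊓ f') := by
    rw [Module.finrank_pos_iff]
    exact Submodule.nontrivial_iff_ne_bot.mpr hint
  have hne2 : Module.finrank ℝ ↥(f ⊓ f') ≠ 2 := by
    intro h2
    have heq : f ⊓ f' = f := Submodule.eq_of_le_of_finrank_le hle (by rw [hf2, h2])
    have hrm : r ∈ f ⊓ f' := heq.symm ▸ hr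
    exact hrf' hrm.2
  have hdim1 : Module.finrank ℝ ↥(f ⊓ f') = 1 := by omega
  -- linear independence and span facts
  have hli : LinearIndependent ℝ ![r, s] := by
    rw [LinearIndependent.pair_iff]
    intro α β h
    have h1 : bform (α • r + β • s) r' = 0 := by rw [h]; simp
    simp only [map_add, map_smul, LinearMap.add_apply, LinearMap.smul_apply, smul_eq_mul,
      hsr'] at h1
    have hα : α = 0 := by
      rcases mul_eq_zero.mp (by linarith : α * bform r r' = 0) with h | h
      · exact h
      · exact absurd h hrr'
    refine ⟨hα, ?_⟩
    subst hα
    simp only [zero_smul, zero_add, smul_eq_zero] at h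
    exact h.resolve_right hs0
  have hli' : LinearIndependent ℝ ![r', s] := by
    rw [LinearIndependent.pair_iff]
    intro α β h
    have h1 : bform (α • r' + β • s) r = 0 := by rw [h]; simp
    simp only [map_add, map_smul, LinearMap.add_apply, LinearMap.smul_apply, smul_eq_mul,
      hsr, hr'r] at h1
    have hα : α = 0 := by
      rcases mul_eq_zero.mp (by linarith : α * bform r r' = 0) with h | h
      · exact h
      · exact absurd h hrr'
    refine ⟨hα, ?_⟩
    subst hα
    simp only [zero_smul, zero_add, smul_eq_zero] at h
    exact h.resolve_right hs0
  have hrange : Set.range ![r, s] = ({r, s} : Set R42) := by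
    rw [Matrix.range_cons, Matrix.range_cons, Matrix.range_empty]
    simp [Set.pair_comm]
  have hrange' : Set.range ![r', s] = ({r', s} : Set R42) := by
    rw [Matrix.range_cons, Matrix.range_cons, Matrix.range_empty]
    simp [Set.pair_comm]
  have hspanrs : Submodule.span ℝ ({r, s} : Set R42) = f := by
    refine Submodule.eq_of_le_of_finrank_le ?_ ?_
    · rw [Submodule.span_le]
      rintro x (h | h) <;> simp_all
    · have := finrank_span_eq_card hli
      rw [hrange] at this
      simp only [Fintype.card_fin] at this
      rw [hf2, this]
  have hspanrs' : Submodule.span ℝ ({r', s} : Set R42) = f' := by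
    refine Submodule.eq_of_le_of_finrank_le ?_ ?_
    · rw [Submodule.span_le]
      rintro x (h | h) <;> simp_all
    · have := finrank_span_eq_card hli'
      rw [hrange'] at this
      simp only [Fintype.card_fin] at this
      rw [hf'2, this]
  have hfspan : f = Submodule.span ℝ ({r} ∪ ((f ⊓ f' : Submodule ℝ R42) : Set R42)) := by
    refine le_antisymm ?_ (Submodule.span_le.mpr ?_)
    · have h1 : Submodule.span ℝ ({r, s} : Set R42) ≤
          Submodule.span ℝ ({r} ∪ ((f ⊓ f' : Submodule ℝ R42) : Set R42)) :=
        Submodule.span_mono (by rintro x (rfl | rfl); exacts [Or.inl rfl, Or.inr hs])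
      exact hspanrs ▸ h1
    · rintro x (rfl | h)
      · exact hr
      · exact hle h
  have hf'span : f' = Submodule.span ℝ ({r'} ∪ ((f ⊓ f' : Submodule ℝ R42) : Set R42)) := by
    refine le_antisymm ?_ (Submodule.span_le.mpr ?_)
    · have h1 : Submodule.span ℝ ({r', s} : Set R42) ≤
          Submodule.span ℝ ({r'} ∪ ((f ⊓ f' : Submodule ℝ R42) : Set R42)) :=
        Submodule.span_mono (by rintro x (rfl | rfl); exacts [Or.inl rfl, Or.inr hs])
      exact hspanrs' ▸ h1
    · rintro x (rfl | h)
      · exact hr'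
      · exact (inf_le_right : f ⊓ f' ≤ f') h
  refine ⟨hdim1, hfspan, hf'span, ?_⟩
  intro μ μ' hμμ' a ha
  subst ha
  have hμ : μ ≠ 0 := left_ne_zero_of_mul hμμ'
  have hμ' : μ' ≠ 0 := right_ne_zero_of_mul hμμ'
  have haa : bform (μ • r + μ' • r') (μ • r + μ' • r') = 2 * μ * μ' * bform r r' := by
    simp only [map_add, map_smul, LinearMap.add_apply, LinearMap.smul_apply, smul_eq_mul,
      hrrz, hr'r'z, hr'r]
    ring
  have haa0 : bform (μ • r + μ' • r') (μ • r + μ' • r') ≠ 0 := by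
    rw [haa]
    exact mul_ne_zero (mul_ne_zero (mul_ne_zero two_ne_zero hμ) hμ') hrr'
  set a := μ • r + μ' • r' with ha
  have key1 : ∀ v ∈ f', lieInv a v ∈ f := by
    intro v hv
    rw [← hspanrs'] at hv
    obtain ⟨α, β, hv'⟩ := Submodule.mem_span_pair.mp hv
    have hbva : bform v a = μ * (α * bform r r') := by
      rw [← hv', ha]
      simp only [map_add, map_smul, LinearMap.add_apply, LinearMap.smul_apply, smul_eq_mul,
        hr'r'z, hsr', hsr, hr'r]
      ring
    have hc : 2 * bform v a / bform a a = α / μ' := by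
      rw [hbva, haa]
      field_simp
    unfold lieInv
    rw [hc]
    have hveq : v - (α / μ') • a = β • s - (α * μ / μ') • r := by
      rw [← hv', ha]
      match_scalars <;> field_simp <;> ring
    rw [hveq]
    exact Submodule.sub_mem f (Submodule.smul_mem f β hsf) (Submodule.smul_mem f _ hr)
  have key2 : ∀ v ∈ f, lieInv a v ∈ f' := by
    intro v hv
    rw [← hspanrs] at hv
    obtain ⟨α, β, hv'⟩ := Submodule.mem_span_pair.mp hv
    have hbva : bform v a = μ' * (α * bform r r') := by
      rw [← hv', ha]
      simp only [map_add, map_smul, LinearMap.add_apply, LinearMap.smul_apply, smul_eq_mul,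
        hrrz, hsr, hsr']
      ring
    have hc : 2 * bform v a / bform a a = α / μ := by
      rw [hbva, haa]
      field_simp
    unfold lieInv
    rw [hc]
    have hveq : v - (α / μ) • a = β • s - (α * μ' / μ) • r' := by
      rw [← hv', ha]
      match_scalars <;> field_simp <;> ring
    rw [hveq]
    exact Submodule.sub_mem f' (Submodule.smul_mem f' β hsf') (Submodule.smul_mem f' _ hr')
  refine ⟨haa, haa0, ?_, ?_⟩
  · ext x
    constructor
    · rintro ⟨v, hv, rfl⟩
      exact key1 v hv
    · intro hx
      exact ⟨lieInv a x, key2 x hx, lieInv_invol a haa0 x⟩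
  · ext x
    constructor
    · rintro ⟨v, hv, rfl⟩
      exact key2 v hv
    · intro hx
      exact ⟨lieInv a x, key1 x hx, lieInv_invol a haa0 x⟩
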